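/- Let f be a smooth real-valued function on an open interval I ⊆ ℝ with f'' nowhere vanishing. On the open set Ω = {(x,y,z,p,r) ∈ ℝ⁵ : p ∈ I}, define H(x,y,z,p,r) = −r² f'''(p)/f''(p). Then the Wünschmann expression of H satisfies, at every point of Ω: 9 D²H_r − 27 D H_p − 18 H_r · D H_r + 18 H_p H_r + 4 H_r³ + 54 H_z = (r³ / f''(p)³) · (40 f'''(p)³ − 45 f''(p) f'''(p) f''''(p) + 9 f''(p)² f'''''(p)); that is, the Wünschmann invariant of H equals r³/f''³ times the Monge expression of f. -/

import Mathlib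

/-- Partial derivative of a function on `ℝ⁵` (coordinates `(x,y,z,p,r)` indexed `0,…,4`)
in the `i`-th coordinate direction. -/
noncomputable def pd (i : Fin 5) (F : (Fin 5 → ℝ) → ℝ) (v : Fin 5 → ℝ) : ℝ :=
  fderiv ℝ F v (Pi.single i 1)

/-- The total derivative operator `D F = F_x + p F_z + r F_p + H F_r`. -/
noncomputable def Dop (H : (Fin 5 → ℝ) → ℝ) (F : (Fin 5 → ℝ) → ℝ) (v : Fin 5 → ℝ) : ℝ :=
  pd 0 F v + v 3 * pd 2 F v + v 4 * pd 3 F v + H v * pd 4 F v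

/-- The operator `Δ F = F_y + G F_z + (DG) F_p + (D²G) F_r`. -/
noncomputable def Delta (G H : (Fin 5 → ℝ) → ℝ) (F : (Fin 5 → ℝ) → ℝ) (v : Fin 5 → ℝ) : ℝ :=
  pd 1 F v + G v * pd 2 F v + Dop H G v * pd 3 F v + Dop H (Dop H G) v * pd 4 F v

/-- The Wünschmann expression
`W(H) = 9 D²H_r − 27 D H_p − 18 H_r D H_r + 18 H_p H_r + 4 H_r³ + 54 H_z`. -/
noncomputable def wunschmann (H : (Fin 5 → ℝ) → ℝ) (v : Fin 5 → ℝ) : ℝ :=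
  9 * Dop H (Dop H (pd 4 H)) v - 27 * Dop H (pd 3 H) v
    - 18 * pd 4 H v * Dop H (pd 4 H) v + 18 * pd 3 H v * pd 4 H v
    + 4 * (pd 4 H v) ^ 3 + 54 * pd 2 H v

/-- The Monge expression `M(f) = 40 f'''³ − 45 f'' f''' f'''' + 9 f''² f'''''`. -/
noncomputable def monge (f : ℝ → ℝ) (p : ℝ) : ℝ :=
  40 * (iteratedDeriv 3 f p) ^ 3
    - 45 * iteratedDeriv 2 f p * iteratedDeriv 3 f p * iteratedDeriv 4 f p
    + 9 * (iteratedDeriv 2 f p) ^ 2 * iteratedDeriv 5 f p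

/- Auxiliary machinery -/

/-- `pd` only depends on the local behaviour of the function. -/
lemma pd_congr' {F G : (Fin 5 → ℝ) → ℝ} {v : Fin 5 → ℝ}
    (h : F =ᶠ[nhds v] G) (i : Fin 5) : pd i F v = pd i G v := by
  unfold pd
  rw [h.fderiv_eq]

open ContinuousLinearMap in
lemma pd_shape1 (φ : ℝ → ℝ) (φp : ℝ) (v : Fin 5 → ℝ)
    (hφ : HasDerivAt φ φp (v 3)) (i : Fin 5) :
    pd i (fun w => w 4 * φ (w 3)) v =
      (Pi.single i 1 : Fin 5 → ℝ) 3 * (v 4 * φp)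
        + (Pi.single i 1 : Fin 5 → ℝ) 4 * φ (v 3) := by
  have h4 : HasFDerivAt (fun w : Fin 5 → ℝ => w 4)
      (proj 4 : (Fin 5 → ℝ) →L[ℝ] ℝ) v := (proj 4 : (Fin 5 → ℝ) →L[ℝ] ℝ).hasFDerivAt
  have h3 : HasFDerivAt (fun w : Fin 5 → ℝ => φ (w 3))
      (φp • (proj 3 : (Fin 5 → ℝ) →L[ℝ] ℝ)) v :=
    hφ.comp_hasFDerivAt v (proj 3 : (Fin 5 → ℝ) →L[ℝ] ℝ).hasFDerivAt
  have hm : HasFDerivAt (fun w : Fin 5 → ℝ => w 4 * φ (w 3))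
      (v 4 • (φp • (proj 3 : (Fin 5 → ℝ) →L[ℝ] ℝ))
        + φ (v 3) • (proj 4 : (Fin 5 → ℝ) →L[ℝ] ℝ)) v :=
    h4.mul h3
  show fderiv ℝ (fun w : Fin 5 → ℝ => w 4 * φ (w 3)) v (Pi.single i 1) = _
  rw [hm.fderiv]
  simp [smul_eq_mul]
  ring

open ContinuousLinearMap in
lemma pd_shape2 (φ : ℝ → ℝ) (φp : ℝ) (v : Fin 5 → ℝ)
    (hφ : HasDerivAt φ φp (v 3)) (i : Fin 5) :
    pd i (fun w => w 4 * (w 4 * φ (w 3))) v =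
      (Pi.single i 1 : Fin 5 → ℝ) 3 * (v 4 ^ 2 * φp)
        + (Pi.single i 1 : Fin 5 → ℝ) 4 * (2 * v 4 * φ (v 3)) := by
  have h4 : HasFDerivAt (fun w : Fin 5 → ℝ => w 4)
      (proj 4 : (Fin 5 → ℝ) →L[ℝ] ℝ) v := (proj 4 : (Fin 5 → ℝ) →L[ℝ] ℝ).hasFDerivAt
  have h3 : HasFDerivAt (fun w : Fin 5 → ℝ => φ (w 3))
      (φp • (proj 3 : (Fin 5 → ℝ) →L[ℝ] ℝ)) v :=
    hφ.comp_hasFDerivAt v (proj 3 : (Fin 5 → ℝ) →L[ℝ] ℝ).hasFDerivAt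
  have hm : HasFDerivAt (fun w : Fin 5 → ℝ => w 4 * φ (w 3))
      (v 4 • (φp • (proj 3 : (Fin 5 → ℝ) →L[ℝ] ℝ))
        + φ (v 3) • (proj 4 : (Fin 5 → ℝ) →L[ℝ] ℝ)) v :=
    h4.mul h3
  have hm2 : HasFDerivAt (fun w : Fin 5 → ℝ => w 4 * (w 4 * φ (w 3)))
      (v 4 • (v 4 • (φp • (proj 3 : (Fin 5 → ℝ) →L[ℝ] ℝ))
          + φ (v 3) • (proj 4 : (Fin 5 → ℝ) →L[ℝ] ℝ))
        + (v 4 * φ (v 3)) • (proj 4 : (Fin 5 → ℝ) →L[ℝ] ℝ)) v :=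
    h4.mul hm
  show fderiv ℝ (fun w : Fin 5 → ℝ => w 4 * (w 4 * φ (w 3))) v (Pi.single i 1) = _
  rw [hm2.fderiv]
  simp [smul_eq_mul]
  ring

/-- `a = −f'''/f''`. -/
noncomputable def aF (f : ℝ → ℝ) : ℝ → ℝ :=
  fun p => -(iteratedDeriv 3 f p / iteratedDeriv 2 f p)

/-- `a' `. -/
noncomputable def a1F (f : ℝ → ℝ) : ℝ → ℝ :=
  fun p => -((iteratedDeriv 4 f p * iteratedDeriv 2 f p - iteratedDeriv 3 f p ^ 2)
    / iteratedDeriv 2 f p ^ 2)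

/-- `a'' `. -/
noncomputable def a2F (f : ℝ → ℝ) : ℝ → ℝ :=
  fun p => -((iteratedDeriv 5 f p * iteratedDeriv 2 f p ^ 2
      - 3 * iteratedDeriv 4 f p * iteratedDeriv 3 f p * iteratedDeriv 2 f p
      + 2 * iteratedDeriv 3 f p ^ 3)
    / iteratedDeriv 2 f p ^ 3)

lemma hgd_aux (I : Set ℝ) (hI : IsOpen I)
    (f : ℝ → ℝ) (hf : ContDiffOn ℝ (⊤ : ℕ∞) f I) :
    ∀ (k : ℕ) (q : ℝ), q ∈ I → HasDerivAt (iteratedDeriv k f) (iteratedDeriv (k+1) f q) q := by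
  intro k q hq
  have hdW : DifferentiableWithinAt ℝ (iteratedDerivWithin k f I) I q :=
    hf.differentiableOn_iteratedDerivWithin
      (by exact_mod_cast lt_top_iff_ne_top.2 (WithTop.natCast_ne_top k))
      hI.uniqueDiffOn q hq
  have heq : Set.EqOn (iteratedDerivWithin k f I) (iteratedDeriv k f) I := by
    intro x hx
    rw [iteratedDerivWithin_eq_iteratedFDerivWithin, iteratedDeriv_eq_iteratedFDeriv,
      iteratedFDerivWithin_of_isOpen k hI hx]
  have hfe : iteratedDerivWithin k f I =ᶠ[nhds q] iteratedDeriv k f :=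
    Filter.eventuallyEq_of_mem (hI.mem_nhds hq) heq
  have hd : DifferentiableAt ℝ (iteratedDeriv k f) q :=
    hfe.differentiableAt_iff.1 (hdW.differentiableAt (hI.mem_nhds hq))
  rw [iteratedDeriv_succ]
  exact hd.hasDerivAt

/-- For `H = −r² f'''(p)/f''(p)` (with `f''` nonvanishing), the Wünschmann
expression of `H` equals `r³/f''(p)³` times the Monge expression of `f`, at every point of
`Ω = {(x,y,z,p,r) : p ∈ I}`. -/
theorem wunschmann_eq_monge_example
    (I : Set ℝ) (hI : IsOpen I) (hI' : Convex ℝ I)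
    (f : ℝ → ℝ) (hf : ContDiffOn ℝ (⊤ : ℕ∞) f I)
    (hnd : ∀ p ∈ I, iteratedDeriv 2 f p ≠ 0) :
    ∀ v : Fin 5 → ℝ, v 3 ∈ I →
      wunschmann
        (fun v => -(v 4) ^ 2 * iteratedDeriv 3 f (v 3) / iteratedDeriv 2 f (v 3)) v =
      (v 4) ^ 3 / (iteratedDeriv 2 f (v 3)) ^ 3 * monge f (v 3) := by
  have hgd := hgd_aux I hI f hf
  -- derivative of `a`
  have ha : ∀ q ∈ I, HasDerivAt (aF f) (a1F f q) q := by
    intro q hq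
    have h := ((hgd 3 q hq).div (hgd 2 q hq) (hnd q hq)).neg
    refine h.congr_deriv ?_
    simp only [a1F]
    field_simp [hnd q hq]
  -- derivative of `a'`
  have ha1 : ∀ q ∈ I, HasDerivAt (a1F f) (a2F f q) q := by
    intro q hq
    have hnum : HasDerivAt
        (fun p => iteratedDeriv 4 f p * iteratedDeriv 2 f p - iteratedDeriv 3 f p ^ 2)
        (iteratedDeriv 5 f q * iteratedDeriv 2 f q + iteratedDeriv 4 f q * iteratedDeriv 3 f q
          - 2 * iteratedDeriv 3 f q ^ 1 * iteratedDeriv 4 f q) q :=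
      ((hgd 4 q hq).mul (hgd 2 q hq)).sub ((hgd 3 q hq).pow 2)
    have hden : HasDerivAt (fun p => iteratedDeriv 2 f p ^ 2)
        (2 * iteratedDeriv 2 f q ^ 1 * iteratedDeriv 3 f q) q := (hgd 2 q hq).pow 2
    have h := (hnum.div hden (pow_ne_zero 2 (hnd q hq))).neg
    refine h.congr_deriv ?_
    simp only [a2F]
    field_simp [hnd q hq]
    ring
  -- derivative of auxiliary coefficient functions
  have hb1 : ∀ q ∈ I, HasDerivAt (fun p => 2 * aF f p) (2 * a1F f q) q :=
    fun q hq => (ha q hq).const_mul 2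
  have hb3 : ∀ q ∈ I, HasDerivAt (fun p => 2 * a1F f p + 2 * aF f p ^ 2)
      (2 * a2F f q + 4 * aF f q * a1F f q) q := by
    intro q hq
    have h := ((ha1 q hq).const_mul 2).add (((ha q hq).pow 2).const_mul 2)
    refine h.congr_deriv ?_
    ring
  intro v hv
  have hΩ : ∀ {w : Fin 5 → ℝ}, w 3 ∈ I → {u : Fin 5 → ℝ | u 3 ∈ I} ∈ nhds w :=
    fun {w} hw => (hI.preimage (continuous_apply 3)).mem_nhds hw
  -- rewrite H in the canonical shape
  have hHfun : (fun v : Fin 5 → ℝ =>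
      -(v 4) ^ 2 * iteratedDeriv 3 f (v 3) / iteratedDeriv 2 f (v 3))
      = fun w : Fin 5 → ℝ => w 4 * (w 4 * aF f (w 3)) := by
    funext w
    simp only [aF]
    ring
  rw [hHfun]
  set H : (Fin 5 → ℝ) → ℝ := fun w : Fin 5 → ℝ => w 4 * (w 4 * aF f (w 3)) with hHdef
  -- partial derivatives of H
  have hpdH : ∀ (i : Fin 5) (w : Fin 5 → ℝ), w 3 ∈ I → pd i H w =
      (Pi.single i 1 : Fin 5 → ℝ) 3 * (w 4 ^ 2 * a1F f (w 3))
        + (Pi.single i 1 : Fin 5 → ℝ) 4 * (2 * w 4 * aF f (w 3)) :=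
    fun i w hw => pd_shape2 (aF f) (a1F f (w 3)) w (ha (w 3) hw) i
  have hpdH4 : ∀ w : Fin 5 → ℝ, w 3 ∈ I → pd 4 H w = w 4 * (2 * aF f (w 3)) := by
    intro w hw; rw [hpdH 4 w hw]; simp [Pi.single_apply]; ring
  have hpdH3 : ∀ w : Fin 5 → ℝ, w 3 ∈ I → pd 3 H w = w 4 * (w 4 * a1F f (w 3)) := by
    intro w hw; rw [hpdH 3 w hw]; simp [Pi.single_apply]; ring
  have hpdH2 : ∀ w : Fin 5 → ℝ, w 3 ∈ I → pd 2 H w = 0 := by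
    intro w hw; rw [hpdH 2 w hw]; simp [Pi.single_apply]
  -- D H_r  (= Dop H (pd 4 H))
  have hpdF1 : ∀ (i : Fin 5) (w : Fin 5 → ℝ), w 3 ∈ I → pd i (pd 4 H) w =
      (Pi.single i 1 : Fin 5 → ℝ) 3 * (w 4 * (2 * a1F f (w 3)))
        + (Pi.single i 1 : Fin 5 → ℝ) 4 * (2 * aF f (w 3)) := by
    intro i w hw
    have he : pd 4 H =ᶠ[nhds w] fun u => u 4 * (2 * aF f (u 3)) :=
      Filter.eventuallyEq_of_mem (hΩ hw) (fun u hu => hpdH4 u hu)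
    rw [pd_congr' he i]
    exact pd_shape1 (fun p => 2 * aF f p) (2 * a1F f (w 3)) w (hb1 (w 3) hw) i
  have hF3 : ∀ w : Fin 5 → ℝ, w 3 ∈ I → Dop H (pd 4 H) w =
      w 4 * (w 4 * (2 * a1F f (w 3) + 2 * aF f (w 3) ^ 2)) := by
    intro w hw
    rw [Dop, hpdF1 0 w hw, hpdF1 2 w hw, hpdF1 3 w hw, hpdF1 4 w hw, hHdef]
    simp [Pi.single_apply]
    try ring
  -- D² H_r  (= Dop H (Dop H (pd 4 H)))
  have hpdF3 : ∀ (i : Fin 5) (w : Fin 5 → ℝ), w 3 ∈ I → pd i (Dop H (pd 4 H)) w =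
      (Pi.single i 1 : Fin 5 → ℝ) 3 * (w 4 ^ 2 * (2 * a2F f (w 3) + 4 * aF f (w 3) * a1F f (w 3)))
        + (Pi.single i 1 : Fin 5 → ℝ) 4
          * (2 * w 4 * (2 * a1F f (w 3) + 2 * aF f (w 3) ^ 2)) := by
    intro i w hw
    have he : Dop H (pd 4 H) =ᶠ[nhds w]
        fun u => u 4 * (u 4 * (2 * a1F f (u 3) + 2 * aF f (u 3) ^ 2)) :=
      Filter.eventuallyEq_of_mem (hΩ hw) (fun u hu => hF3 u hu)
    rw [pd_congr' he i]
    exact pd_shape2 (fun p => 2 * a1F f p + 2 * aF f p ^ 2) _ w (hb3 (w 3) hw) i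
  have hDDF1 : Dop H (Dop H (pd 4 H)) v =
      v 4 * (v 4 ^ 2 * (2 * a2F f (v 3) + 4 * aF f (v 3) * a1F f (v 3)))
        + H v * (2 * v 4 * (2 * a1F f (v 3) + 2 * aF f (v 3) ^ 2)) := by
    rw [Dop, hpdF3 0 v hv, hpdF3 2 v hv, hpdF3 3 v hv, hpdF3 4 v hv]
    simp [Pi.single_apply]
    try ring
  -- D H_p  (= Dop H (pd 3 H))
  have hpdF2 : ∀ (i : Fin 5) (w : Fin 5 → ℝ), w 3 ∈ I → pd i (pd 3 H) w =
      (Pi.single i 1 : Fin 5 → ℝ) 3 * (w 4 ^ 2 * a2F f (w 3))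
        + (Pi.single i 1 : Fin 5 → ℝ) 4 * (2 * w 4 * a1F f (w 3)) := by
    intro i w hw
    have he : pd 3 H =ᶠ[nhds w] fun u => u 4 * (u 4 * a1F f (u 3)) :=
      Filter.eventuallyEq_of_mem (hΩ hw) (fun u hu => hpdH3 u hu)
    rw [pd_congr' he i]
    exact pd_shape2 (a1F f) (a2F f (w 3)) w (ha1 (w 3) hw) i
  have hDF2 : Dop H (pd 3 H) v =
      v 4 * (v 4 ^ 2 * a2F f (v 3)) + H v * (2 * v 4 * a1F f (v 3)) := by
    rw [Dop, hpdF2 0 v hv, hpdF2 2 v hv, hpdF2 3 v hv, hpdF2 4 v hv]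
    simp [Pi.single_apply]
    try ring
  -- assemble
  rw [wunschmann, hDDF1, hDF2, hF3 v hv, hpdH4 v hv, hpdH3 v hv, hpdH2 v hv, hHdef]
  simp only [aF, a1F, a2F, monge]
  have h2 := hnd (v 3) hv
  field_simp
  ring
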